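/- Let p ∈ ℝ[x1,x2] with p(0,0) = 1 and total degree m ≥ 1, with coefficients p_α for multi-indices α = (α1,α2), |α| ≤ m. For θ ∈ ℝ define the monic univariate polynomial q_θ(t) = ∑_{|α|≤m} p_α (2cos θ)^{α1} (2sin θ)^{α2} t^{m−α1−α2} (formally q_θ(t) = t^m p((2cos θ)/t, (2sin θ)/t)), and let H(θ) be its m×m Hermite matrix, H(θ)_{ij} = N_{i+j}(q_θ) for 0 ≤ i, j ≤ m−1, where N_k(q_θ) is the (real) sum of the k-th powers of the complex roots of q_θ counted with multiplicity. Then p satisfies the real zero condition at the origin if and only if H(θ) is positive semidefinite for every θ ∈ ℝ. -/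

import Mathlib

open Polynomial Complex
open scoped Matrix

private lemma stmt7_sum_swap {ι : Type*} (s : Finset ι) (M : Multiset ℂ) (g : ι → ℂ → ℂ) :
    (M.map fun w => ∑ i ∈ s, g i w).sum = ∑ i ∈ s, (M.map (g i)).sum := by
  classical
  induction s using Finset.cons_induction with
  | empty => simp
  | cons a s ha ih =>
    simp only [Finset.sum_cons, ← ih, Multiset.sum_map_add]

private lemma stmt7_quadform (m : ℕ) (M : Multiset ℂ) (v : Fin m → ℝ) :
    ((M.map fun w => (∑ i : Fin m, ((v i : ℂ)) * w ^ (i : ℕ)) ^ 2).sum).re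
      = ∑ i : Fin m, ∑ j : Fin m,
          v i * v j * ((M.map fun z => z ^ ((i : ℕ) + (j : ℕ))).sum).re := by
  have h1 : ∀ w : ℂ, (∑ i : Fin m, ((v i : ℂ)) * w ^ (i : ℕ)) ^ 2
      = ∑ i : Fin m, ∑ j : Fin m, ((v i * v j : ℝ) : ℂ) * w ^ ((i : ℕ) + (j : ℕ)) := by
    intro w
    rw [sq, Finset.sum_mul_sum]
    refine Finset.sum_congr rfl fun i _ => Finset.sum_congr rfl fun j _ => ?_
    rw [pow_add]; push_cast; ring
  rw [Multiset.map_congr rfl fun w _ => h1 w, stmt7_sum_swap, Complex.re_sum]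
  refine Finset.sum_congr rfl fun i _ => ?_
  rw [stmt7_sum_swap, Complex.re_sum]
  refine Finset.sum_congr rfl fun j _ => ?_
  rw [Multiset.sum_map_mul_left, Complex.re_ofReal_mul]

private lemma stmt7_nonneg (m : ℕ) (M : Multiset ℂ) (h : ∀ w ∈ M, w.im = 0) (v : Fin m → ℝ) :
    0 ≤ ((M.map fun w => (∑ i : Fin m, ((v i : ℂ)) * w ^ (i : ℕ)) ^ 2).sum).re := by
  have : ((M.map fun w => (∑ i : Fin m, ((v i : ℂ)) * w ^ (i : ℕ)) ^ 2).sum).re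
      = ((M.map fun w => (∑ i : Fin m, ((v i : ℂ)) * w ^ (i : ℕ)) ^ 2).map Complex.re).sum := by
    exact map_multiset_sum Complex.reAddGroupHom _
  rw [this, Multiset.map_map]
  refine Multiset.sum_nonneg fun x hx => ?_
  obtain ⟨w, hwM, rfl⟩ := Multiset.mem_map.mp hx
  have hw : w = ((w.re : ℝ) : ℂ) := by
    apply Complex.ext <;> simp [h w hwM]
  simp only [Function.comp_apply]
  rw [hw]
  have : (∑ i : Fin m, ((v i : ℂ)) * ((w.re : ℝ) : ℂ) ^ (i : ℕ))
      = (((∑ i : Fin m, v i * w.re ^ (i : ℕ) : ℝ)) : ℂ) := by push_cast; rfl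
  rw [this, ← Complex.ofReal_pow, Complex.ofReal_re]
  positivity

private lemma stmt7_exists_neg (m : ℕ) (hm : 1 ≤ m) (Q : Polynomial ℂ) (hQ0 : Q ≠ 0)
    (hQd : Q.natDegree ≤ m)
    (hconj : ∀ w : ℂ, Q.IsRoot w → Q.IsRoot ((starRingEnd ℂ) w))
    (x : ℂ) (hx : x ∈ Q.roots) (hxim : x.im ≠ 0) :
    ∃ v : Fin m → ℝ,
      ((Q.roots.map fun w => (∑ i : Fin m, ((v i : ℂ)) * w ^ (i : ℕ)) ^ 2).sum).re < 0 := by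
  classical
  set M := Q.roots with hM
  set D := M.toFinset with hD
  set E := D.erase x with hE
  have hxD : x ∈ D := Multiset.mem_toFinset.mpr hx
  have hmemD : ∀ y : ℂ, y ∈ D ↔ Q.IsRoot y := by
    intro y
    rw [Multiset.mem_toFinset, hM, Polynomial.mem_roots hQ0]
  -- conjugate of x is a distinct root
  have hxbar : (starRingEnd ℂ) x ∈ D := (hmemD _).mpr (hconj x ((hmemD x).mp hxD))
  have hxbar_ne : (starRingEnd ℂ) x ≠ x := fun h => hxim (Complex.conj_eq_iff_im.mp h)
  have hprod_ne : (∏ y ∈ E, (x - y)) ≠ 0 := by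
    rw [Finset.prod_ne_zero_iff]
    intro y hy
    exact sub_ne_zero.mpr (Ne.symm (Finset.ne_of_mem_erase hy))
  set c : ℂ := (∏ y ∈ E, (x - y))⁻¹ with hc
  set L : Polynomial ℂ := Polynomial.C c * ∏ y ∈ E, (Polynomial.X - Polynomial.C y) with hL
  have hdegL : L.natDegree < m := by
    have h1 : L.natDegree ≤ E.card := by
      refine le_trans (Polynomial.natDegree_C_mul_le _ _) ?_
      refine le_trans (Polynomial.natDegree_prod_le _ _) ?_
      refine le_trans (Finset.sum_le_card_nsmul _ _ 1 fun y _ => ?_) (by simp)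
      exact Polynomial.natDegree_X_sub_C_le y
    have h2 : E.card = D.card - 1 := Finset.card_erase_of_mem hxD
    have h3 : D.card ≤ m := le_trans (le_trans (Multiset.toFinset_card_le M) (Polynomial.card_roots' Q)) hQd
    have h4 : 1 ≤ D.card := Finset.card_pos.mpr ⟨x, hxD⟩
    omega
  have hLx : L.eval x = 1 := by
    rw [hL]
    simp only [Polynomial.eval_mul, Polynomial.eval_C, Polynomial.eval_prod, Polynomial.eval_sub,
      Polynomial.eval_X, Polynomial.eval_C]
    rw [hc, inv_mul_cancel₀ hprod_ne]
  have hLy : ∀ y ∈ E, L.eval y = 0 := by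
    intro y hy
    rw [hL]
    simp only [Polynomial.eval_mul, Polynomial.eval_C, Polynomial.eval_prod, Polynomial.eval_sub,
      Polynomial.eval_X, Polynomial.eval_C]
    rw [Finset.prod_eq_zero hy (by simp), mul_zero]
  set v : Fin m → ℝ := fun i => (L.coeff (i : ℕ)).im with hv
  set S : ℂ → ℂ := fun w => ∑ i : Fin m, ((v i : ℂ)) * w ^ (i : ℕ) with hS
  have hSval : ∀ w : ℂ,
      S w = (L.eval w - (starRingEnd ℂ) (L.eval ((starRingEnd ℂ) w))) / (2 * Complex.I) := by
    intro w
    have e1 : L.eval w = ∑ i ∈ Finset.range m, L.coeff i * w ^ i :=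
      Polynomial.eval_eq_sum_range' hdegL w
    have e2 : (starRingEnd ℂ) (L.eval ((starRingEnd ℂ) w))
        = ∑ i ∈ Finset.range m, (starRingEnd ℂ) (L.coeff i) * w ^ i := by
      rw [Polynomial.eval_eq_sum_range' hdegL, map_sum]
      refine Finset.sum_congr rfl fun i _ => ?_
      rw [_root_.map_mul, _root_.map_pow, Complex.conj_conj]
    rw [hS, e1, e2, ← Finset.sum_sub_distrib, Finset.sum_div]
    show ∑ i : Fin m, (((L.coeff (i : ℕ)).im : ℝ) : ℂ) * w ^ (i : ℕ) = _
    rw [Fin.sum_univ_eq_sum_range (fun n => (((L.coeff n).im : ℝ) : ℂ) * w ^ n) m]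
    refine Finset.sum_congr rfl fun i _ => ?_
    rw [eq_div_iff (by simp [Complex.I_ne_zero] : (2 * Complex.I : ℂ) ≠ 0), ← sub_mul,
      Complex.sub_conj]
    push_cast
    ring
  refine ⟨v, ?_⟩
  have hxbarE : (starRingEnd ℂ) x ∈ E := Finset.mem_erase.mpr ⟨hxbar_ne, hxbar⟩
  have hSx : S x ^ 2 = -(1/4) := by
    rw [hSval, hLx, hLy _ hxbarE, map_zero, sub_zero, div_pow, one_pow, _root_.mul_pow, Complex.I_sq]
    norm_num
  have hSxbar : S ((starRingEnd ℂ) x) ^ 2 = -(1/4) := by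
    rw [hSval, hLy _ hxbarE, Complex.conj_conj, hLx, map_one, zero_sub, div_pow, neg_one_sq,
      _root_.mul_pow, Complex.I_sq]
    norm_num
  have hS0 : ∀ y ∈ D, y ∉ ({x, (starRingEnd ℂ) x} : Finset ℂ) → S y = 0 := by
    intro y hyD hy
    simp only [Finset.mem_insert, Finset.mem_singleton, not_or] at hy
    have hyE : y ∈ E := Finset.mem_erase.mpr ⟨hy.1, hyD⟩
    have hybar : (starRingEnd ℂ) y ∈ E := by
      refine Finset.mem_erase.mpr ⟨?_, (hmemD _).mpr (hconj y ((hmemD y).mp hyD))⟩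
      intro h
      exact hy.2 (by rw [← Complex.conj_conj y, h])
    rw [hSval, hLy _ hyE, hLy _ hybar, map_zero, sub_zero, zero_div]
  have hpair_sub : ({x, (starRingEnd ℂ) x} : Finset ℂ) ⊆ D := by
    intro y hy
    simp only [Finset.mem_insert, Finset.mem_singleton] at hy
    rcases hy with rfl | rfl
    · exact hxD
    · exact hxbar
  have key : (M.map fun w => S w ^ 2).sum
      = (Multiset.count x M) • (-(1/4) : ℂ)
        + (Multiset.count ((starRingEnd ℂ) x) M) • (-(1/4) : ℂ) := by
    rw [Finset.sum_multiset_map_count]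
    rw [← Finset.sum_subset hpair_sub (fun y hyD hy => by rw [hS0 y hyD hy]; simp)]
    rw [Finset.sum_insert (by simpa using Ne.symm hxbar_ne), Finset.sum_singleton, hSx, hSxbar]
  have hgoal : ((M.map fun w => S w ^ 2).sum).re < 0 := by
    rw [key]
    have h1 : 1 ≤ Multiset.count x M := Multiset.count_pos.mpr hx
    simp only [nsmul_eq_mul, Complex.add_re, Complex.mul_re, Complex.natCast_re,
      Complex.natCast_im]
    set a := Multiset.count x M
    set b := Multiset.count ((starRingEnd ℂ) x) M
    have hb : (0:ℝ) ≤ (b:ℝ) := Nat.cast_nonneg b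
    have ha : (1:ℝ) ≤ (a:ℝ) := by exact_mod_cast h1
    have : ((-(1/4) : ℂ)).re = -(1/4) := by norm_num
    rw [this]
    nlinarith
  exact hgoal

set_option maxHeartbeats 1000000 in
theorem stmt7 (m : ℕ) (hm : 1 ≤ m) (p : MvPolynomial (Fin 2) ℝ)
    (hp0 : MvPolynomial.eval (0 : Fin 2 → ℝ) p = 1) (hdeg : p.totalDegree = m)
    (q : ℝ → Polynomial ℝ)
    (hq : ∀ θ : ℝ, q θ = ∑ α ∈ p.support,
      Polynomial.C (MvPolynomial.coeff α p *
        (2 * Real.cos θ) ^ (α 0) * (2 * Real.sin θ) ^ (α 1)) *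
        Polynomial.X ^ (m - (α 0 + α 1)))
    (H : ℝ → Matrix (Fin m) (Fin m) ℝ)
    (hH : ∀ (θ : ℝ) (i j : Fin m), H θ i j =
      (((((q θ).map (algebraMap ℝ ℂ)).roots.map
        (fun z => z ^ ((i : ℕ) + (j : ℕ)))).sum)).re) :
    (∀ z : Fin 2 → ℝ, ∀ w : ℂ,
        ((MvPolynomial.aeval (fun i : Fin 2 => Polynomial.C (z i) * Polynomial.X) p :
          Polynomial ℝ).map (algebraMap ℝ ℂ)).IsRoot w → w.im = 0) ↔
      (∀ θ : ℝ, (H θ).PosSemidef) := by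
  classical
  set A : ℝ →+* ℂ := algebraMap ℝ ℂ with hA
  set Ev : (Fin 2 → ℝ) → ℂ → ℂ :=
    fun z w => MvPolynomial.eval₂ A (fun i => A (z i) * w) p with hEv
  set u : ℝ → Fin 2 → ℝ := fun θ => ![2 * Real.cos θ, 2 * Real.sin θ] with hu
  -- constant coefficient of p is 1
  have hc0 : MvPolynomial.coeff 0 p = 1 := by
    have h1 : MvPolynomial.constantCoeff p = 1 := by
      rw [← MvPolynomial.eval_zero]; exact hp0
    rwa [MvPolynomial.constantCoeff_eq] at h1
  have hsupp0 : (0 : Fin 2 →₀ ℕ) ∈ p.support := by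
    rw [MvPolynomial.mem_support_iff, hc0]; exact one_ne_zero
  have hsum : ∀ α ∈ p.support, α 0 + α 1 ≤ m := by
    intro α hα
    have h := MvPolynomial.le_totalDegree hα
    rw [hdeg] at h
    rwa [Finsupp.sum_fintype _ _ (fun i => rfl), Fin.sum_univ_two] at h
  -- F1 : evaluation of the diagonal substitution
  have F1 : ∀ (z : Fin 2 → ℝ) (w : ℂ),
      Polynomial.eval w (((MvPolynomial.aeval
        (fun i : Fin 2 => Polynomial.C (z i) * Polynomial.X) p : Polynomial ℝ)).map A)
        = Ev z w := by
    intro z w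
    rw [Polynomial.eval_map, ← Polynomial.aeval_def]
    have h := DFunLike.congr_fun
      (MvPolynomial.comp_aeval (R := ℝ) (fun i : Fin 2 => Polynomial.C (z i) * Polynomial.X)
        (Polynomial.aeval w : Polynomial ℝ →ₐ[ℝ] ℂ)) p
    simp only [AlgHom.comp_apply] at h
    rw [h, hEv, MvPolynomial.aeval_def]
    congr 1
    funext i
    rw [map_mul, Polynomial.aeval_C, Polynomial.aeval_X]
  -- F2 : value at w = 0
  have F2 : ∀ z : Fin 2 → ℝ, Ev z 0 = 1 := by
    intro z
    have h1 : Ev z 0 = MvPolynomial.eval₂ A (fun i : Fin 2 => A ((0 : Fin 2 → ℝ) i)) p := by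
      show MvPolynomial.eval₂ A (fun i : Fin 2 => A (z i) * 0) p = _
      rw [show (fun i : Fin 2 => A (z i) * 0) = (fun i : Fin 2 => A ((0 : Fin 2 → ℝ) i))
        from by funext i; simp]
    have h2 := MvPolynomial.eval₂_comp_left A (RingHom.id ℝ)
      (fun i : Fin 2 => (0 : Fin 2 → ℝ) i) p
    rw [MvPolynomial.eval₂_id, RingHom.comp_id] at h2
    rw [show ((⇑A ∘ fun i : Fin 2 => (0 : Fin 2 → ℝ) i))
      = (fun i : Fin 2 => A ((0 : Fin 2 → ℝ) i)) from rfl] at h2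
    rw [h1, ← h2]
    have h3 : (MvPolynomial.eval fun i : Fin 2 => (0 : Fin 2 → ℝ) i) p = 1 := hp0
    rw [h3, map_one]
  -- F3 : scaling
  have F3 : ∀ (l : ℝ) (z : Fin 2 → ℝ) (w : ℂ),
      Ev (fun i => l * z i) w = Ev z (A l * w) := by
    intro l z w
    show MvPolynomial.eval₂ A (fun i : Fin 2 => A (l * z i) * w) p
        = MvPolynomial.eval₂ A (fun i : Fin 2 => A (z i) * (A l * w)) p
    rw [show (fun i : Fin 2 => A (l * z i) * w) = (fun i : Fin 2 => A (z i) * (A l * w))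
      from by funext i; rw [map_mul]; ring]
  -- F4 : evaluation of q θ
  have F4 : ∀ (θ : ℝ) (w : ℂ), w ≠ 0 →
      Polynomial.eval w ((q θ).map A) = w ^ m * Ev (u θ) w⁻¹ := by
    intro θ w hw
    rw [Polynomial.eval_map, hq θ, Polynomial.eval₂_finset_sum, hEv]
    simp only []
    rw [MvPolynomial.eval₂_eq', Finset.mul_sum]
    refine Finset.sum_congr rfl fun α hα => ?_
    rw [Polynomial.eval₂_mul, Polynomial.eval₂_C, Polynomial.eval₂_X_pow, Fin.prod_univ_two]
    have hu0 : u θ 0 = 2 * Real.cos θ := rfl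
    have hu1 : u θ 1 = 2 * Real.sin θ := rfl
    rw [hu0, hu1, pow_sub₀ w hw (hsum α hα), map_mul, map_mul, map_pow, map_pow]
    rw [mul_pow, mul_pow, ← inv_pow, pow_add]
    ring
  -- the polynomials q θ are monic of degree ≤ m
  have hcoeffm : ∀ θ : ℝ, (q θ).coeff m = 1 := by
    intro θ
    rw [hq θ, Polynomial.finset_sum_coeff]
    rw [Finset.sum_eq_single (0 : Fin 2 →₀ ℕ)]
    · rw [show ((0 : Fin 2 →₀ ℕ) 0) = 0 from rfl, show ((0 : Fin 2 →₀ ℕ) 1) = 0 from rfl,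
        pow_zero, pow_zero, mul_one, mul_one, show m - (0 + 0) = m from by omega,
        Polynomial.coeff_C_mul, Polynomial.coeff_X_pow, if_pos rfl, mul_one, hc0]
    · intro α hα hne
      have h01 : α 0 + α 1 ≠ 0 := by
        intro h
        apply hne
        apply Finsupp.ext
        intro i
        have h0 : α 0 = 0 := by omega
        have h1 : α 1 = 0 := by omega
        fin_cases i
        · exact h0
        · exact h1
      have h2 : ¬ (m = m - (α 0 + α 1)) := by
        have := hsum α hα; omega
      rw [Polynomial.coeff_C_mul, Polynomial.coeff_X_pow, if_neg h2, mul_zero]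
    · intro h; exact absurd hsupp0 h
  have hdegq : ∀ θ : ℝ, (q θ).natDegree ≤ m := by
    intro θ
    rw [hq θ]
    refine Polynomial.natDegree_sum_le_of_forall_le _ _ fun α _ => ?_
    refine le_trans (Polynomial.natDegree_C_mul_le _ _) ?_
    rw [Polynomial.natDegree_X_pow]
    omega
  have hmonic : ∀ θ : ℝ, (q θ).Monic := fun θ =>
    Polynomial.monic_of_natDegree_le_of_coeff_eq_one m (hdegq θ) (hcoeffm θ)
  have hQ0 : ∀ θ : ℝ, (q θ).map A ≠ 0 := fun θ => ((hmonic θ).map A).ne_zero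
  have hQd : ∀ θ : ℝ, ((q θ).map A).natDegree ≤ m := by
    intro θ
    rw [(hmonic θ).natDegree_map]
    exact hdegq θ
  -- F6 : conjugation of roots
  have F6 : ∀ (g : Polynomial ℝ) (w : ℂ), (g.map A).IsRoot w →
      (g.map A).IsRoot ((starRingEnd ℂ) w) := by
    intro g w h
    have hcomp : (starRingEnd ℂ).comp A = A := by
      ext x
      rw [RingHom.comp_apply, hA, Complex.coe_algebraMap, Complex.conj_ofReal]
    have h2 : Polynomial.eval ((starRingEnd ℂ) w) (g.map A)
        = (starRingEnd ℂ) (Polynomial.eval w (g.map A)) := by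
      rw [Polynomial.eval_map, Polynomial.eval_map, Polynomial.hom_eval₂, hcomp]
    rw [Polynomial.IsRoot, h2]
    rw [Polynomial.IsRoot] at h
    rw [h, map_zero]
  -- key quadratic-form identity
  have keyQF : ∀ (θ : ℝ) (v : Fin m → ℝ),
      star v ⬝ᵥ ((H θ) *ᵥ v)
        = ((((q θ).map A).roots.map
            (fun w => (∑ i : Fin m, ((v i : ℂ)) * w ^ (i : ℕ)) ^ 2)).sum).re := by
    intro θ v
    rw [stmt7_quadform]
    simp only [dotProduct, Matrix.mulVec, star_trivial, hH θ, Finset.mul_sum]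
    refine Finset.sum_congr rfl fun i _ => Finset.sum_congr rfl fun j _ => by ring
  -- PSD implies all roots of q θ are real
  have hRootsReal : ∀ θ : ℝ, (H θ).PosSemidef →
      ∀ w ∈ ((q θ).map A).roots, w.im = 0 := by
    intro θ hPSD w hw
    by_contra him
    obtain ⟨v, hv⟩ := stmt7_exists_neg m hm ((q θ).map A) (hQ0 θ) (hQd θ)
      (fun w' hw' => F6 (q θ) w' hw') w hw him
    have h2 := hPSD.dotProduct_mulVec_nonneg v
    rw [keyQF θ v] at h2
    linarith
  constructor
  · -- real zero condition → PSD
    intro hRZ θ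
    refine Matrix.PosSemidef.of_dotProduct_mulVec_nonneg ?_ ?_
    · show (H θ)ᴴ = H θ
      ext i j
      rw [Matrix.conjTranspose_apply, hH θ j i, hH θ i j, star_trivial,
        Nat.add_comm (j : ℕ) (i : ℕ)]
    · intro v
      rw [keyQF θ v]
      refine stmt7_nonneg m _ ?_ v
      intro w hw
      by_cases hw0 : w = 0
      · simp [hw0]
      · have hroot : Polynomial.eval w ((q θ).map A) = 0 := (Polynomial.mem_roots (hQ0 θ)).mp hw
        rw [F4 θ w hw0] at hroot
        have hEv0 : Ev (u θ) w⁻¹ = 0 := by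
          rcases mul_eq_zero.mp hroot with h | h
          · exact absurd h (pow_ne_zero m hw0)
          · exact h
        have hroot2 : ((MvPolynomial.aeval
            (fun i : Fin 2 => Polynomial.C (u θ i) * Polynomial.X) p : Polynomial ℝ).map
              A).IsRoot w⁻¹ := by
          rw [Polynomial.IsRoot, F1]
          exact hEv0
        have him : (w⁻¹).im = 0 := hRZ (u θ) w⁻¹ hroot2
        have hinv := Complex.inv_im w⁻¹
        rw [inv_inv] at hinv
        rw [hinv, him]
        simp
  · -- PSD → real zero condition
    intro hPSD z w hroot
    have hEz : Ev z w = 0 := by rw [← F1]; exact hroot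
    have hw0 : w ≠ 0 := by
      intro h
      rw [h, F2 z] at hEz
      exact one_ne_zero hEz
    have hz0 : ¬ (z 0 = 0 ∧ z 1 = 0) := by
      rintro ⟨h0, h1⟩
      have hzz : Ev z w = 1 := by
        have : Ev z w = Ev z 0 := by
          show MvPolynomial.eval₂ A (fun i : Fin 2 => A (z i) * w) p
              = MvPolynomial.eval₂ A (fun i : Fin 2 => A (z i) * 0) p
          rw [show (fun i : Fin 2 => A (z i) * w) = (fun i : Fin 2 => A (z i) * 0)
            from by funext i; fin_cases i <;> simp [h0, h1]]
        rw [this, F2 z]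
      rw [hzz] at hEz
      exact one_ne_zero hEz
    set ρ : ℝ := Real.sqrt (z 0 ^ 2 + z 1 ^ 2) with hρdef
    have hzz_pos : 0 < z 0 ^ 2 + z 1 ^ 2 := by
      rcases not_and_or.mp hz0 with h | h
      · have := pow_two_pos_of_ne_zero h
        nlinarith [sq_nonneg (z 1)]
      · have := pow_two_pos_of_ne_zero h
        nlinarith [sq_nonneg (z 0)]
    have hρ : 0 < ρ := Real.sqrt_pos.mpr hzz_pos
    have hρ2 : ρ * ρ = z 0 ^ 2 + z 1 ^ 2 := Real.mul_self_sqrt (le_of_lt hzz_pos)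
    set ζ : ℂ := ((z 0 / ρ : ℝ) : ℂ) + ((z 1 / ρ : ℝ) : ℂ) * Complex.I with hζdef
    have hζre : ζ.re = z 0 / ρ := by simp [hζdef]
    have hζim : ζ.im = z 1 / ρ := by simp [hζdef]
    have hnormSq : Complex.normSq ζ = 1 := by
      rw [Complex.normSq_apply, hζre, hζim]
      field_simp
      nlinarith [hρ2]
    have habs : ‖ζ‖ = 1 := by
      rw [Complex.norm_def, hnormSq, Real.sqrt_one]
    have hζ0 : ζ ≠ 0 := by
      intro h
      rw [h] at habs
      simp at habs
    set θ : ℝ := ζ.arg with hθdef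
    have hcos : Real.cos θ = z 0 / ρ := by
      rw [hθdef, Complex.cos_arg hζ0, habs, hζre, div_one]
    have hsin : Real.sin θ = z 1 / ρ := by
      rw [hθdef, Complex.sin_arg, habs, hζim, div_one]
    have hzu : z = fun i => (ρ / 2) * u θ i := by
      funext i
      fin_cases i
      · show z 0 = (ρ / 2) * (2 * Real.cos θ)
        rw [hcos]
        field_simp [hρ.ne']
      · show z 1 = (ρ / 2) * (2 * Real.sin θ)
        rw [hsin]
        field_simp [hρ.ne']
    have hEz2 : Ev (u θ) (A (ρ / 2) * w) = 0 := by
      rw [← F3]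
      rw [← hzu]
      exact hEz
    set ω : ℂ := A (ρ / 2) * w with hωdef
    have hω0 : ω ≠ 0 := by
      refine mul_ne_zero ?_ hw0
      simp only [hA]
      rw [Complex.coe_algebraMap, Complex.ofReal_ne_zero]
      positivity
    have hv0 : ω⁻¹ ≠ 0 := inv_ne_zero hω0
    have hvroot : ω⁻¹ ∈ ((q θ).map A).roots := by
      rw [Polynomial.mem_roots (hQ0 θ), Polynomial.IsRoot, F4 θ ω⁻¹ hv0, inv_inv, hEz2,
        mul_zero]
    have him : (ω⁻¹).im = 0 := hRootsReal θ (hPSD θ) ω⁻¹ hvroot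
    have hωim : ω.im = 0 := by
      rw [show ω = (ω⁻¹)⁻¹ from (inv_inv ω).symm, Complex.inv_im, him]
      simp
    have hωim2 : ω.im = (ρ / 2) * w.im := by
      rw [hωdef]
      simp only [hA, Complex.coe_algebraMap]
      simp [Complex.mul_im]
    rw [hωim2] at hωim
    rcases mul_eq_zero.mp hωim with h | h
    · exfalso
      have : (0:ℝ) < ρ / 2 := by positivity
      linarith [this, h.symm.le]
    · exact h
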